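/- The polynomial $f(x_1,x_2,x_3) = v_0 x_1^6 + v_6(x_2^6 + 30 x_1 x_2^4 x_3 + 90 x_1^2 x_2^2 x_3^2 + 20 x_1^3 x_3^3) + v_{12} x_3^6$ is positive for all nonzero $(x_1,x_2,x_3) \in \mathbb{R}^3$ if and only if $v_0, v_6, v_{12} > 0$ and $\sqrt{v_0 v_{12}} > (560 + 70\sqrt{70}) v_6$. -/
import Mathlib

/-- Key cubic inequality: for `q = √70`, `s, w ≥ 0`,
`s^3 - 30ws^2 + 90w^2s + (1100+140q)w^3 = (s-(10+q)w)^2 (s+(2q-10)w) ≥ 0`. -/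
lemma keypoly (q s w : ℝ) (hq : q ^ 2 = 70) (hq0 : 0 ≤ q) (hs : 0 ≤ s) (hw : 0 ≤ w) :
    0 ≤ s ^ 3 - 30 * w * s ^ 2 + 90 * w ^ 2 * s + (1100 + 140 * q) * w ^ 3 := by
  have hq8 : 8 ≤ q := by nlinarith
  have h1 : 0 ≤ s + (2 * q - 10) * w := by nlinarith
  have hid : s ^ 3 - 30 * w * s ^ 2 + 90 * w ^ 2 * s + (1100 + 140 * q) * w ^ 3
      = (s - (10 + q) * w) ^ 2 * (s + (2 * q - 10) * w) := by
    linear_combination (3 * s * w ^ 2 - 2 * (q + 15) * w ^ 3) * hq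
  rw [hid]
  exact mul_nonneg (sq_nonneg _) h1

lemma keyineq (q u s : ℝ) (hq : q ^ 2 = 70) (hq0 : 0 ≤ q) (hs : 0 ≤ s) :
    -((1120 + 140 * q) * |u| ^ 3) ≤ s ^ 3 + 30 * u * s ^ 2 + 90 * u ^ 2 * s + 20 * u ^ 3 := by
  rcases le_or_gt 0 u with h | h
  · rw [abs_of_nonneg h]
    nlinarith [mul_nonneg (mul_nonneg hs hs) hs, mul_nonneg (mul_nonneg h hs) hs,
      mul_nonneg (mul_nonneg h h) hs, mul_nonneg (mul_nonneg h h) h,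
      mul_nonneg hq0 (mul_nonneg (mul_nonneg h h) h)]
  · rw [abs_of_neg h]
    have := keypoly q s (-u) hq hq0 hs (by linarith)
    nlinarith [this]

lemma amgm (v0 v12 x1 x3 : ℝ) (h0 : 0 ≤ v0) (h12 : 0 ≤ v12) :
    2 * Real.sqrt (v0 * v12) * |x1 * x3| ^ 3 ≤ v0 * x1 ^ 6 + v12 * x3 ^ 6 := by
  have hA : Real.sqrt v0 ^ 2 = v0 := Real.sq_sqrt h0
  have hB : Real.sqrt v12 ^ 2 = v12 := Real.sq_sqrt h12
  have hAB : Real.sqrt (v0 * v12) = Real.sqrt v0 * Real.sqrt v12 := Real.sqrt_mul h0 _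
  have e1 : |x1| ^ 6 = x1 ^ 6 := by rw [pow_abs, abs_of_nonneg (by positivity)]
  have e3 : |x3| ^ 6 = x3 ^ 6 := by rw [pow_abs, abs_of_nonneg (by positivity)]
  have eA1 : Real.sqrt v0 ^ 2 * |x1| ^ 6 = v0 * x1 ^ 6 := by rw [hA, e1]
  have eB3 : Real.sqrt v12 ^ 2 * |x3| ^ 6 = v12 * x3 ^ 6 := by rw [hB, e3]
  rw [hAB, abs_mul]
  nlinarith [sq_nonneg (Real.sqrt v0 * |x1| ^ 3 - Real.sqrt v12 * |x3| ^ 3), eA1, eB3]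

theorem stmt_4 (v0 v6 v12 : ℝ) :
    (∀ x1 x2 x3 : ℝ, (x1, x2, x3) ≠ (0, 0, 0) →
      0 < v0 * x1 ^ 6 +
          v6 * (x2 ^ 6 + 30 * x1 * x2 ^ 4 * x3 + 90 * x1 ^ 2 * x2 ^ 2 * x3 ^ 2 +
            20 * x1 ^ 3 * x3 ^ 3) + v12 * x3 ^ 6) ↔
    (0 < v0 ∧ 0 < v6 ∧ 0 < v12 ∧
      Real.sqrt (v0 * v12) > (560 + 70 * Real.sqrt 70) * v6) := by
  set q := Real.sqrt 70 with hqdef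
  have hq : q ^ 2 = 70 := Real.sq_sqrt (by norm_num)
  have hq0 : 0 ≤ q := Real.sqrt_nonneg 70
  constructor
  · intro H
    have h0 : 0 < v0 := by have := H 1 0 0 (by norm_num); norm_num at this; linarith
    have h6 : 0 < v6 := by have := H 0 1 0 (by norm_num); norm_num at this; linarith
    have h12 : 0 < v12 := by have := H 0 0 1 (by norm_num); norm_num at this; linarith
    refine ⟨h0, h6, h12, ?_⟩
    set α := v12 ^ ((1 : ℝ) / 6) with hαdef
    set β := v0 ^ ((1 : ℝ) / 6) with hβdef
    have hα0 : 0 < α := Real.rpow_pos_of_pos h12 _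
    have hβ0 : 0 < β := Real.rpow_pos_of_pos h0 _
    have eα : α ^ (6 : ℕ) = v12 := by
      rw [hαdef, ← Real.rpow_natCast (v12 ^ ((1 : ℝ) / 6)) 6, ← Real.rpow_mul h12.le]
      norm_num
    have eβ : β ^ (6 : ℕ) = v0 := by
      rw [hβdef, ← Real.rpow_natCast (v0 ^ ((1 : ℝ) / 6)) 6, ← Real.rpow_mul h0.le]
      norm_num
    set x2 := Real.sqrt ((10 + q) * (α * β)) with hx2def
    have e2 : x2 ^ 2 = (10 + q) * (α * β) :=
      Real.sq_sqrt (by positivity)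
    have hf := H α x2 (-β) (by
      intro h
      rw [Prod.mk.injEq, Prod.mk.injEq] at h
      exact hα0.ne' h.1)
    have heq : v0 * α ^ 6 +
          v6 * (x2 ^ 6 + 30 * α * x2 ^ 4 * (-β) + 90 * α ^ 2 * x2 ^ 2 * (-β) ^ 2 +
            20 * α ^ 3 * (-β) ^ 3) + v12 * (-β) ^ 6
        = 2 * (v0 * v12) - (1120 + 140 * q) * v6 * (α * β) ^ 3 := by
      linear_combination v0 * eα + v12 * eβ + v6 * (α * β) ^ 3 * q * hq +
        v6 * (x2 ^ 4 + x2 ^ 2 * ((10 + q) * (α * β)) + ((10 + q) * (α * β)) ^ 2 -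
          30 * (α * β) * (x2 ^ 2 + (10 + q) * (α * β)) + 90 * (α * β) ^ 2) * e2
    rw [heq] at hf
    have hS2 : v0 * v12 = Real.sqrt (v0 * v12) ^ 2 :=
      (Real.sq_sqrt (by positivity)).symm
    have hSw : Real.sqrt (v0 * v12) = (α * β) ^ 3 := by
      have h : v0 * v12 = ((α * β) ^ 3) ^ 2 := by
        linear_combination (-(β ^ 6)) * eα - v12 * eβ
      rw [h, Real.sqrt_sq (by positivity)]
    have hSpos : 0 < Real.sqrt (v0 * v12) := by rw [hSw]; positivity
    nlinarith [hf, hSpos, hS2, hSw, mul_pos hSpos hSpos]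
  · rintro ⟨h0, h6, h12, hS⟩ x1 x2 x3 hx
    rw [Ne, Prod.mk.injEq, Prod.mk.injEq] at hx
    push_neg at hx
    rcases eq_or_ne (x1 * x3) 0 with hu | hu
    · -- cross terms vanish
      have hzero : x1 = 0 ∨ x3 = 0 := mul_eq_zero.mp hu
      have h1 : 0 ≤ v0 * x1 ^ 6 := by positivity
      have h2 : 0 ≤ v6 * x2 ^ 6 := by positivity
      have h3 : 0 ≤ v12 * x3 ^ 6 := by positivity
      have hpos : 0 < v0 * x1 ^ 6 + v6 * x2 ^ 6 + v12 * x3 ^ 6 := by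
        rcases eq_or_ne x1 0 with e1 | e1
        · rcases eq_or_ne x2 0 with e2' | e2'
          · have e3 : x3 ≠ 0 := by
              intro e3; exact (hx e1 e2') e3
            have : 0 < v12 * x3 ^ 6 := by positivity
            linarith
          · have : 0 < v6 * x2 ^ 6 := by positivity
            linarith
        · have : 0 < v0 * x1 ^ 6 := by positivity
          linarith
      rcases hzero with e | e <;> rw [e] <;> ring_nf <;> ring_nf at hpos <;>
        simp [e] at hpos ⊢ <;> nlinarith [hpos]
    · have habs : 0 < |x1 * x3| ^ 3 := by positivity
      have hkey := keyineq q (x1 * x3) (x2 ^ 2) hq hq0 (by positivity)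
      have hkey6 : -(v6 * ((1120 + 140 * q) * |x1 * x3| ^ 3)) ≤
          v6 * ((x2 ^ 2) ^ 3 + 30 * (x1 * x3) * (x2 ^ 2) ^ 2 +
            90 * (x1 * x3) ^ 2 * (x2 ^ 2) + 20 * (x1 * x3) ^ 3) := by
        nlinarith [mul_le_mul_of_nonneg_left hkey h6.le]
      have ham := amgm v0 v12 x1 x3 h0.le h12.le
      have hfac : 0 < 2 * |x1 * x3| ^ 3 * (Real.sqrt (v0 * v12) - (560 + 70 * q) * v6) := by
        have := sub_pos.mpr hS
        positivity
      nlinarith [ham, hkey6, hfac]
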